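/- Let $E\subset\mathbb{R}^n$ be weakly porous with constants $0<c,\delta<1$. If $Q\subset R$ are cubes with $|R|=2^n|Q|$, then there exists $k=k(n,c)\in\mathbb{N}$ such that $|\mathcal{M}(R)|\le 4^{nk}\delta^{-k}|\mathcal{M}(Q)|$. -/

import Mathlib

open MeasureTheory Metric Set

noncomputable section

/-- An axis-parallel half-open cube in `ℝⁿ`, given by its lower corner and side length. -/
structure Cube (n : ℕ) where
  a : EuclideanSpace ℝ (Fin n)
  l : ℝ
  pos : 0 < l

/-- The set of points of a cube. -/
def Cube.set {n : ℕ} (P : Cube n) : Set (EuclideanSpace ℝ (Fin n)) :=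
  {x | ∀ i, P.a i ≤ x i ∧ x i < P.a i + P.l}

/-- A weight: locally integrable and a.e. positive. -/
def IsWeight {n : ℕ} (w : EuclideanSpace ℝ (Fin n) → ℝ) : Prop :=
  LocallyIntegrable w volume ∧ ∀ᵐ x ∂(volume : Measure (EuclideanSpace ℝ (Fin n))), 0 < w x

/-- The `A₁` inequality with constant `C`, over all axis-parallel cubes. -/
def A1With {n : ℕ} (w : EuclideanSpace ℝ (Fin n) → ℝ) (C : ℝ) : Prop :=
  ∀ P : Cube n, (⨍ x in P.set, w x) ≤ C * essInf w (volume.restrict P.set)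

/-- Membership in the Muckenhoupt class `A₁`. -/
def MemA1 {n : ℕ} (w : EuclideanSpace ℝ (Fin n) → ℝ) : Prop :=
  IsWeight w ∧ ∃ C : ℝ, A1With w C

/-- The `A_p` inequality with constant `C`, over all axis-parallel cubes. -/
def ApWith {n : ℕ} (w : EuclideanSpace ℝ (Fin n) → ℝ) (p C : ℝ) : Prop :=
  ∀ P : Cube n,
    (⨍ x in P.set, w x) * (⨍ x in P.set, w x ^ (1 / (1 - p))) ^ (p - 1) ≤ C

/-- Membership in the Muckenhoupt class `A_p`. -/
def MemAp {n : ℕ} (w : EuclideanSpace ℝ (Fin n) → ℝ) (p : ℝ) : Prop :=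
  IsWeight w ∧ ∃ C : ℝ, ApWith w p C

/-- `Q` is a dyadic subcube of `P`. -/
def IsDyadicSubcube {n : ℕ} (P Q : Cube n) : Prop :=
  ∃ (j : ℕ) (k : Fin n → ℕ), (∀ i, k i < 2 ^ j) ∧
    Q.l = P.l / 2 ^ j ∧ ∀ i, Q.a i = P.a i + P.l * k i / 2 ^ j

/-- A cube is `E`-free if it does not meet `E`. -/
def EFree {n : ℕ} (E : Set (EuclideanSpace ℝ (Fin n))) (Q : Cube n) : Prop :=
  Q.set ∩ E = ∅

/-- The measure `|𝓜(P)|` of a largest `E`-free dyadic subcube of `P`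
(`0` if there is none). -/
def maxFree {n : ℕ} (E : Set (EuclideanSpace ℝ (Fin n))) (P : Cube n) : ℝ :=
  sSup {v : ℝ | ∃ Q : Cube n, IsDyadicSubcube P Q ∧ EFree E Q ∧ v = (volume Q.set).toReal}

/-- Weak porosity with constants `c`, `δ`. -/
def WeaklyPorousWith {n : ℕ} (E : Set (EuclideanSpace ℝ (Fin n))) (c δ : ℝ) : Prop :=
  ∀ P : Cube n, ∃ (N : ℕ) (Q : Fin N → Cube n),
    (∀ k, IsDyadicSubcube P (Q k) ∧ EFree E (Q k)) ∧
    (∀ k m, k ≠ m → Disjoint (Q k).set (Q m).set) ∧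
    (∀ k, δ * maxFree E P ≤ (volume (Q k).set).toReal) ∧
    c * (volume P.set).toReal ≤ ∑ k, (volume (Q k).set).toReal

/-- A set is weakly porous if it is weakly porous with some constants `0 < c, δ < 1`. -/
def WeaklyPorous {n : ℕ} (E : Set (EuclideanSpace ℝ (Fin n))) : Prop :=
  ∃ c δ : ℝ, 0 < c ∧ c < 1 ∧ 0 < δ ∧ δ < 1 ∧ WeaklyPorousWith E c δ

/-- Porosity. -/
def Porous {n : ℕ} (E : Set (EuclideanSpace ℝ (Fin n))) : Prop :=
  ∃ c : ℝ, 0 < c ∧ ∀ (x : EuclideanSpace ℝ (Fin n)) (r : ℝ), 0 < r →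
    ∃ y : EuclideanSpace ℝ (Fin n), ball y (c * r) ⊆ ball x r \ E

/-- The distance weight `dist(·,E)^{-α}`. -/
def distw {n : ℕ} (E : Set (EuclideanSpace ℝ (Fin n))) (α : ℝ)
    (x : EuclideanSpace ℝ (Fin n)) : ℝ :=
  infDist x E ^ (-α)

/-- `h_E(B(x,R))`: the supremum of radii `t` of balls contained in `B(x,R) \ E`. -/
def hFree {n : ℕ} (E : Set (EuclideanSpace ℝ (Fin n))) (x : EuclideanSpace ℝ (Fin n))
    (R : ℝ) : ℝ :=
  sSup {t : ℝ | ∃ y ∈ ball x R, ball y t ⊆ ball x R \ E}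

/-- The set of admissible exponents in the definition of the Muckenhoupt exponent. -/
def MuckSet {n : ℕ} (E : Set (EuclideanSpace ℝ (Fin n))) : Set ℝ :=
  {α : ℝ | ∃ C : ℝ, ∀ x ∈ E, ∀ R r : ℝ, 0 < r → r < hFree E x R → hFree E x R ≤ R →
    (volume (thickening r E ∩ ball x R)).toReal ≤
      C * (hFree E x R / r) ^ (-α) * (volume (ball x R)).toReal}

open scoped Classical in
/-- The Muckenhoupt exponent of `E`. -/
def MuckExp {n : ℕ} (E : Set (EuclideanSpace ℝ (Fin n))) : ℝ :=
  if ∀ x ∈ E, ∀ R : ℝ, 0 < R → 0 < hFree E x R then sSup (MuckSet E) else 0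

end


noncomputable section
open scoped ENNReal
namespace WPaux
variable {n : ℕ}

def box (lo w : Fin n → ℝ) : Set (EuclideanSpace ℝ (Fin n)) :=
  {x | ∀ i, lo i ≤ x i ∧ x i < lo i + w i}

lemma box_eq_preimage (lo w : Fin n → ℝ) :
    box lo w = ((MeasurableEquiv.toLp 2 (Fin n → ℝ)).symm) ⁻¹'
      (Set.univ.pi fun i => Set.Ico (lo i) (lo i + w i)) := by
  ext x; simp [box, Set.mem_pi, Set.mem_Ico]

lemma measurableSet_box (lo w : Fin n → ℝ) : MeasurableSet (box lo w) := by
  rw [box_eq_preimage]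
  exact ((MeasurableEquiv.toLp 2 (Fin n → ℝ)).symm).measurable
    (MeasurableSet.univ_pi fun i => measurableSet_Ico)

lemma volume_box (lo w : Fin n → ℝ) :
    volume (box lo w) = ∏ i, ENNReal.ofReal (w i) := by
  rw [box_eq_preimage, MeasurePreserving.measure_preimage
    (EuclideanSpace.volume_preserving_symm_measurableEquiv_toLp (Fin n))
    (MeasurableSet.univ_pi fun i => measurableSet_Ico).nullMeasurableSet,
    volume_pi_pi]
  congr 1; ext i; rw [Real.volume_Ico, add_sub_cancel_left]

lemma volume_box_ne_top (lo w : Fin n → ℝ) : volume (box lo w) ≠ ⊤ := by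
  rw [volume_box]
  exact ENNReal.prod_ne_top fun i _ => ENNReal.ofReal_ne_top

lemma volume_box_toReal (lo w : Fin n → ℝ) (h : ∀ i, 0 ≤ w i) :
    (volume (box lo w)).toReal = ∏ i, w i := by
  rw [volume_box, ← ENNReal.ofReal_prod_of_nonneg (fun i _ => h i),
    ENNReal.toReal_ofReal (Finset.prod_nonneg fun i _ => h i)]

lemma cube_set_eq_box (P : Cube n) : P.set = box P.a (fun _ => P.l) := rfl

lemma measurableSet_cube (P : Cube n) : MeasurableSet P.set :=
  measurableSet_box _ _

lemma volume_cube (P : Cube n) : (volume P.set).toReal = P.l ^ n := by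
  rw [cube_set_eq_box, volume_box_toReal _ _ (fun _ => P.pos.le),
    Finset.prod_const, Finset.card_univ, Fintype.card_fin]

lemma volume_cube_ne_top (P : Cube n) : volume P.set ≠ ⊤ := by
  rw [cube_set_eq_box]; exact volume_box_ne_top _ _

lemma mem_cube {P : Cube n} {x : EuclideanSpace ℝ (Fin n)} :
    x ∈ P.set ↔ ∀ i, P.a i ≤ x i ∧ x i < P.a i + P.l := Iff.rfl

lemma corner_mem (C : Cube n) : C.a ∈ C.set :=
  fun _ => ⟨le_refl _, lt_add_of_pos_right _ C.pos⟩

lemma subset_coords {P C : Cube n} (h : C.set ⊆ P.set) (i : Fin n) :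
    P.a i ≤ C.a i ∧ C.a i + C.l ≤ P.a i + P.l := by
  have h1 := (h (corner_mem C)) i
  refine ⟨h1.1, ?_⟩
  by_contra hcon
  push_neg at hcon
  set ε := min C.l ((C.a i + C.l) - (P.a i + P.l)) with hε
  have hε0 : 0 < ε := lt_min C.pos (by linarith)
  set x : EuclideanSpace ℝ (Fin n) := WithLp.toLp 2 (Function.update C.a i (C.a i + C.l - ε)) with hx
  have hxmem : x ∈ C.set := by
    intro j
    rcases eq_or_ne j i with rfl | hne
    · rw [hx]
      simp only [PiLp.toLp_apply, Function.update_self]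
      constructor
      · have : ε ≤ C.l := min_le_left _ _
        linarith
      · linarith
    · rw [hx]
      simp only [PiLp.toLp_apply, Function.update_of_ne hne]
      exact ⟨le_refl _, lt_add_of_pos_right _ C.pos⟩
  have h2 := (h hxmem) i
  rw [hx] at h2
  simp only [PiLp.toLp_apply, Function.update_self] at h2
  have : ε ≤ (C.a i + C.l) - (P.a i + P.l) := min_le_right _ _
  linarith [h2.2]

lemma dyadic_subset {P D : Cube n} (h : IsDyadicSubcube P D) : D.set ⊆ P.set := by
  obtain ⟨j, k, hk, hl, ha⟩ := h
  intro x hx i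
  have h2j : (0:ℝ) < 2 ^ j := by positivity
  have hx1 := (hx i).1
  have hx2 := (hx i).2
  rw [ha i] at hx1 hx2
  rw [hl] at hx2
  have hk1 : ((k i : ℝ) + 1) ≤ 2 ^ j := by
    have h := Nat.succ_le_of_lt (hk i)
    have h2 : ((k i + 1 : ℕ) : ℝ) ≤ ((2 ^ j : ℕ) : ℝ) := Nat.cast_le.mpr h
    push_cast at h2
    exact h2
  have hnn : (0:ℝ) ≤ P.l * k i / 2 ^ j :=
    div_nonneg (mul_nonneg P.pos.le (Nat.cast_nonneg _)) (by positivity)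
  refine ⟨by linarith, ?_⟩
  have h3 : P.l * ((k i : ℝ) + 1) ≤ P.l * 2 ^ j := mul_le_mul_of_nonneg_left hk1 P.pos.le
  have h4 : P.l * (k i : ℝ) / 2 ^ j + P.l / 2 ^ j ≤ P.l := by
    rw [← add_div, div_le_iff₀ h2j]
    nlinarith
  linarith

lemma efree_of_subset {E : Set (EuclideanSpace ℝ (Fin n))} {C D : Cube n}
    (h : D.set ⊆ C.set) (hf : EFree E C) : EFree E D := by
  unfold EFree at *
  exact Set.eq_empty_of_subset_empty (hf ▸ Set.inter_subset_inter_left E h)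

lemma maxFree_bddAbove (E : Set (EuclideanSpace ℝ (Fin n))) (P : Cube n) :
    BddAbove {v : ℝ | ∃ Q : Cube n, IsDyadicSubcube P Q ∧ EFree E Q ∧
      v = (volume Q.set).toReal} := by
  refine ⟨(volume P.set).toReal, ?_⟩
  rintro v ⟨D, hD, -, rfl⟩
  exact ENNReal.toReal_mono (volume_cube_ne_top P) (measure_mono (dyadic_subset hD))

lemma le_maxFree {E : Set (EuclideanSpace ℝ (Fin n))} {P D : Cube n}
    (h1 : IsDyadicSubcube P D) (h2 : EFree E D) :
    (volume D.set).toReal ≤ maxFree E P :=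
  le_csSup (maxFree_bddAbove E P) ⟨D, h1, h2, rfl⟩

lemma maxFree_nonneg (E : Set (EuclideanSpace ℝ (Fin n))) (P : Cube n) :
    0 ≤ maxFree E P :=
  Real.sSup_nonneg (by rintro v ⟨D, -, -, rfl⟩; exact ENNReal.toReal_nonneg)

lemma regrid {E : Set (EuclideanSpace ℝ (Fin n))} (hn : 0 < n) {P C : Cube n}
    (hsub : C.set ⊆ P.set) (hfree : EFree E C) :
    (C.l / 4) ^ n ≤ maxFree E P := by
  have hCpos := C.pos
  have hPpos := P.pos
  have hCl : C.l ≤ P.l := by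
    obtain ⟨h1, h2⟩ := subset_coords hsub ⟨0, hn⟩
    linarith
  have hex : ∃ j : ℕ, P.l / 2 ^ j ≤ C.l / 2 := by
    obtain ⟨j, hj⟩ := pow_unbounded_of_one_lt (P.l / (C.l / 2)) one_lt_two
    refine ⟨j, ?_⟩
    rw [div_le_iff₀ (by positivity : (0:ℝ) < 2 ^ j)]
    rw [div_lt_iff₀ (by linarith : (0:ℝ) < C.l / 2)] at hj
    linarith
  set j := Nat.find hex with hjdef
  have hj1 : P.l / 2 ^ j ≤ C.l / 2 := Nat.find_spec hex
  have hj0 : j ≠ 0 := by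
    intro h
    rw [h] at hj1
    simp only [pow_zero, div_one] at hj1
    linarith
  have hjm : ¬ (P.l / 2 ^ (j - 1) ≤ C.l / 2) := Nat.find_min hex (by omega)
  push_neg at hjm
  set t := P.l / 2 ^ j with htdef
  have htpos : 0 < t := by positivity
  have h2t : P.l / 2 ^ (j-1) = 2 * t := by
    rw [htdef, show j = (j-1) + 1 by omega, pow_succ]
    simp only [Nat.add_sub_cancel]
    field_simp
  have ht4 : C.l / 4 < t := by rw [h2t] at hjm; linarith
  have ht2 : 2 * t ≤ C.l := by linarith
  classical
  set k : Fin n → ℕ := fun i => ⌈(C.a i - P.a i) / t⌉₊ with hkdef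
  have hk1 : ∀ i, (C.a i - P.a i) / t ≤ k i := fun i => Nat.le_ceil _
  have hk2 : ∀ i, (k i : ℝ) < (C.a i - P.a i) / t + 1 := fun i =>
    Nat.ceil_lt_add_one (div_nonneg (by linarith [(subset_coords hsub i).1]) htpos.le)
  set D : Cube n := ⟨WithLp.toLp 2 (fun i => P.a i + k i * t : Fin n → ℝ), t, htpos⟩ with hDdef
  have hklt : ∀ i, k i < 2 ^ j := by
    intro i
    obtain ⟨hc1, hc2⟩ := subset_coords hsub i
    have h5 : (k i : ℝ) * t < P.l - C.l + t := by
      have := mul_lt_mul_of_pos_right (hk2 i) htpos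
      rw [add_mul, div_mul_cancel₀ _ htpos.ne', one_mul] at this
      nlinarith
    have h6 : (k i : ℝ) * t < P.l - t := by nlinarith
    have h7 : (k i : ℝ) < 2 ^ j - 1 := by
      have hPt : P.l = 2 ^ j * t := by
        rw [htdef]; field_simp
      rw [hPt] at h6
      nlinarith
    have : (k i : ℝ) < ((2 ^ j : ℕ) : ℝ) := by push_cast; linarith
    exact_mod_cast this
  have hdyadic : IsDyadicSubcube P D := by
    refine ⟨j, k, hklt, rfl, fun i => ?_⟩
    show P.a i + k i * t = P.a i + P.l * k i / 2 ^ j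
    rw [htdef]; ring
  have hDsubC : D.set ⊆ C.set := by
    intro x hx i
    have hx1 := (hx i).1
    have hx2 := (hx i).2
    show C.a i ≤ x i ∧ x i < C.a i + C.l
    have hD1 : D.a i = P.a i + k i * t := rfl
    rw [hD1] at hx1 hx2
    have hklo : C.a i - P.a i ≤ (k i : ℝ) * t := by
      have := mul_le_mul_of_nonneg_right (hk1 i) htpos.le
      rwa [div_mul_cancel₀ _ htpos.ne'] at this
    have hkhi : (k i : ℝ) * t < C.a i - P.a i + t := by
      have := mul_lt_mul_of_pos_right (hk2 i) htpos
      rwa [add_mul, div_mul_cancel₀ _ htpos.ne', one_mul] at this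
    have hDl : D.l = t := rfl
    rw [hDl] at hx2
    constructor
    · linarith
    · linarith
  have hvol : (volume D.set).toReal = t ^ n := by
    rw [volume_cube]
  calc (C.l / 4) ^ n ≤ t ^ n := pow_le_pow_left₀ (by linarith) ht4.le n
    _ = (volume D.set).toReal := hvol.symm
    _ ≤ maxFree E P := le_maxFree hdyadic (efree_of_subset hDsubC hfree)



/-- coordinate gap between cube `A` and the reference cube `Q`. -/
def gap (Q A : Cube n) (i : Fin n) : ℝ :=
  max (A.a i - (Q.a i + Q.l)) (max (Q.a i - (A.a i + A.l)) 0)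

lemma gap_le_iff {Q A : Cube n} {i : Fin n} {d : ℝ} :
    gap Q A i ≤ d ↔ A.a i - (Q.a i + Q.l) ≤ d ∧ Q.a i - (A.a i + A.l) ≤ d ∧ 0 ≤ d := by
  simp [gap, max_le_iff, and_assoc]

lemma exists_point_notin {c : ℝ} {N : ℕ}
    (X : Cube n) (fam : Fin N → Cube n)
    (hsub : ∀ m, (fam m).set ⊆ X.set)
    (hdisj : ∀ k m, k ≠ m → Disjoint (fam k).set (fam m).set)
    (hsum : c * (volume X.set).toReal ≤ ∑ m, (volume (fam m).set).toReal)
    (S : Set (EuclideanSpace ℝ (Fin n))) (hc0 : 0 < c)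
    (hS : volume S ≤ ENNReal.ofReal ((c/2) * (volume X.set).toReal))
    (hX : 0 < (volume X.set).toReal) :
    ∃ m, ∃ p, p ∈ (fam m).set ∧ p ∉ S := by
  by_contra hcon
  push_neg at hcon
  have hUS : (⋃ m, (fam m).set) ⊆ S := iUnion_subset fun m p hp => hcon m p hp
  have h1 : volume (⋃ m, (fam m).set) = ∑' m, volume (fam m).set :=
    measure_iUnion (fun k m hkm => hdisj k m hkm) (fun m => measurableSet_cube (fam m))
  rw [tsum_fintype] at h1
  have h2 : (volume (⋃ m, (fam m).set)).toReal = ∑ m, (volume (fam m).set).toReal := by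
    rw [h1, ENNReal.toReal_sum (fun m _ => volume_cube_ne_top (fam m))]
  have h3 : (volume (⋃ m, (fam m).set)).toReal ≤ (c/2) * (volume X.set).toReal := by
    have hmm : volume (⋃ m, (fam m).set) ≤ volume S := measure_mono hUS
    have h4 := le_trans hmm hS
    have h5 := ENNReal.toReal_mono ENNReal.ofReal_ne_top h4
    rwa [ENNReal.toReal_ofReal (by positivity)] at h5
  rw [h2] at h3
  nlinarith

lemma shell_volume (lo : Fin n → ℝ) (i : Fin n) {g L : ℝ} (hg : 0 ≤ g) (hL : 0 ≤ L) :
    volume (box lo (fun j => if j = i then g else L)) = ENNReal.ofReal (g * L ^ (n-1)) := by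
  classical
  rw [volume_box]
  rw [← Finset.mul_prod_erase Finset.univ _ (Finset.mem_univ i)]
  have h1 : ∀ j ∈ Finset.univ.erase i,
      ENNReal.ofReal (if j = i then g else L) = ENNReal.ofReal L := fun j hj => by
    rw [if_neg (Finset.ne_of_mem_erase hj)]
  rw [Finset.prod_congr rfl h1, Finset.prod_const,
    Finset.card_erase_of_mem (Finset.mem_univ i), Finset.card_univ, Fintype.card_fin,
    if_pos rfl, ← ENNReal.ofReal_pow hL, ← ENNReal.ofReal_mul hg]


set_option maxHeartbeats 1000000 in
lemma shell_pigeonhole {c : ℝ} (hn : 0 < n) (X : Cube n) {γ : ℝ} (hγ0 : 0 < γ)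
    (hγc : 2 * (n:ℝ) * γ ≤ c / 2) (hc0 : 0 < c) {N : ℕ} (fam : Fin N → Cube n)
    (hsub : ∀ m, (fam m).set ⊆ X.set)
    (hdisj : ∀ k m, k ≠ m → Disjoint (fam k).set (fam m).set)
    (hsum : c * (volume X.set).toReal ≤ ∑ m, (volume (fam m).set).toReal) :
    ∃ m, ∃ p, p ∈ (fam m).set ∧
      ∀ i, X.a i + γ * X.l ≤ p i ∧ p i < X.a i + X.l - γ * X.l := by
  classical
  set L := X.l with hLdef
  have hL0 : 0 < L := X.pos
  have hγL0 : (0:ℝ) ≤ γ * L := by positivity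
  have hLn1 : L ^ n = L * L ^ (n-1) := by
    conv_lhs => rw [show n = (n-1)+1 by omega, pow_succ]
    ring
  have hXvol : (volume X.set).toReal = L ^ n := volume_cube X
  set S : Set (EuclideanSpace ℝ (Fin n)) :=
    (⋃ i, box X.a (fun j => if j = i then γ*L else L)) ∪
    (⋃ i, box (Function.update X.a i (X.a i + L - γ*L)) (fun j => if j = i then γ*L else L))
    with hSdef
  have hSvol : volume S ≤ ENNReal.ofReal ((c/2) * (volume X.set).toReal) := by
    have t1 : ∀ (lo : Fin n → ℝ) (i : Fin n),
        volume (box lo (fun j => if j = i then γ*L else L))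
          = ENNReal.ofReal (γ*L*L^(n-1)) := fun lo i => shell_volume lo i hγL0 hL0.le
    have t2 : ∀ (f : Fin n → Fin n → ℝ),
        (∑' i : Fin n, volume (box (f i) (fun j => if j = i then γ*L else L)))
          = (n : ℝ≥0∞) * ENNReal.ofReal (γ*L*L^(n-1)) := by
      intro f
      rw [tsum_fintype]
      rw [Finset.sum_congr rfl (fun i _ => t1 (f i) i), Finset.sum_const,
        Finset.card_univ, Fintype.card_fin, nsmul_eq_mul]
    have hle : volume S ≤ (n : ℝ≥0∞) * ENNReal.ofReal (γ*L*L^(n-1)) +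
        (n : ℝ≥0∞) * ENNReal.ofReal (γ*L*L^(n-1)) := by
      rw [hSdef]
      refine le_trans (measure_union_le _ _) (add_le_add ?_ ?_)
      · exact le_trans (measure_iUnion_le _) (le_of_eq (t2 (fun _ => X.a)))
      · exact le_trans (measure_iUnion_le _)
          (le_of_eq (t2 (fun i => Function.update X.a i (X.a i + L - γ*L))))
    refine le_trans hle ?_
    have hcast : (n : ℝ≥0∞) = ENNReal.ofReal (n : ℝ) := by
      simp [ENNReal.ofReal_natCast]
    rw [hcast, ← ENNReal.ofReal_mul (by positivity), ← ENNReal.ofReal_add (by positivity)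
      (by positivity)]
    apply ENNReal.ofReal_le_ofReal
    rw [hXvol, hLn1]
    have hx0 : (0:ℝ) ≤ L * L^(n-1) := by positivity
    have hkey : (n:ℝ)*(γ*L*L^(n-1)) + (n:ℝ)*(γ*L*L^(n-1))
        = (2*(n:ℝ)*γ) * (L * L^(n-1)) := by ring
    rw [hkey]
    exact mul_le_mul_of_nonneg_right hγc hx0
  obtain ⟨m, p, hpmem, hpS⟩ := exists_point_notin X fam hsub hdisj hsum S hc0 hSvol
    (by rw [hXvol]; positivity)
  refine ⟨m, p, hpmem, fun i => ?_⟩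
  have hpX : p ∈ X.set := hsub m hpmem
  constructor
  · by_contra hcon
    push_neg at hcon
    refine hpS ?_
    rw [hSdef]
    refine mem_union_left _ (mem_iUnion.mpr ⟨i, fun j => ?_⟩)
    show X.a j ≤ p j ∧ p j < X.a j + (if j = i then γ*L else L)
    rcases eq_or_ne j i with rfl | hne
    · rw [if_pos rfl]
      exact ⟨(hpX j).1, by linarith⟩
    · rw [if_neg hne]
      exact hpX j
  · by_contra hcon
    push_neg at hcon
    refine hpS ?_
    rw [hSdef]
    refine mem_union_right _ (mem_iUnion.mpr ⟨i, fun j => ?_⟩)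
    show Function.update X.a i (X.a i + L - γ*L) j ≤ p j ∧
      p j < Function.update X.a i (X.a i + L - γ*L) j + (if j = i then γ*L else L)
    rcases eq_or_ne j i with rfl | hne
    · rw [Function.update_self, if_pos rfl]
      have h2 := (hpX j).2
      exact ⟨hcon, by linarith⟩
    · rw [Function.update_of_ne hne, if_neg hne]
      exact hpX j

set_option maxHeartbeats 1000000 in
lemma step {E : Set (EuclideanSpace ℝ (Fin n))} {c δ : ℝ} (hn : 0 < n)
    (WP : WeaklyPorousWith E c δ) (hc0 : 0 < c) (hc1 : c < 1)
    (hδ0 : 0 < δ) (Q : Cube n) (F : Cube n) (hF : EFree E F)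
    {d : ℝ} (hd : 0 ≤ d) (hgap : ∀ i, gap Q F i ≤ d) :
    ∃ W : Cube n, EFree E W ∧
      δ ^ ((n:ℝ))⁻¹ * min F.l (c/(8*n) * Q.l / 2) / 4 ≤ W.l ∧
      (∀ i, gap Q W i ≤
        max 0 (d + min F.l (c/(8*n) * Q.l / 2) - c/(8*n) * (Q.l + min F.l (c/(8*n) * Q.l / 2)))) ∧
      (d = 0 → (min W.l (c/(8*n) * Q.l / 2) / 4) ^ n ≤ maxFree E Q) := by
  classical
  have hnR : (0:ℝ) < n := by exact_mod_cast hn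
  have hn1 : (1:ℝ) ≤ n := by exact_mod_cast hn
  have hq : 0 < Q.l := Q.pos
  set q := Q.l with hqdef
  set γ : ℝ := c/(8*n) with hγdef
  have hγ0 : 0 < γ := by rw [hγdef]; positivity
  have hγ1 : γ ≤ 1/8 := by
    rw [hγdef, div_le_div_iff₀ (by positivity) (by norm_num)]
    nlinarith
  set θ := min F.l (γ * q / 2) with hθdef
  have hθ0 : 0 < θ := lt_min F.pos (by positivity)
  have hθF : θ ≤ F.l := min_le_left _ _
  have hθγ : θ ≤ γ * q / 2 := min_le_right _ _
  have hγq : γ * q ≤ q / 8 := by nlinarith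
  set L := q + θ with hLdef
  have hL0 : 0 < L := by positivity
  have hθL : θ ≤ L := by nlinarith
  have hγLθ : γ * q / 2 ≤ γ * L - θ := by nlinarith
  have hγL1 : γ * L < L := by nlinarith
  -- the chunk C of F, of side θ, positioned nearest to Q
  have hFgap : ∀ i, F.a i - (Q.a i + q) ≤ d ∧ Q.a i - (F.a i + F.l) ≤ d := by
    intro i
    have h := (gap_le_iff (d := d)).mp (hgap i)
    exact ⟨h.1, h.2.1⟩
  set C : Cube n := ⟨WithLp.toLp 2 (fun i => max (F.a i) (min (Q.a i) (F.a i + F.l - θ)) : Fin n → ℝ), θ, hθ0⟩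
    with hCdef
  have hCa : ∀ i, C.a i = max (F.a i) (min (Q.a i) (F.a i + F.l - θ)) := fun i => rfl
  have hCl : C.l = θ := rfl
  have hCF : C.set ⊆ F.set := by
    intro x hx i
    have h1 := (hx i).1
    have h2 := (hx i).2
    rw [hCa i] at h1 h2
    rw [hCl] at h2
    have hm : max (F.a i) (min (Q.a i) (F.a i + F.l - θ)) ≤ F.a i + F.l - θ := by
      apply max_le
      · linarith
      · exact min_le_right _ _
    exact ⟨le_trans (le_max_left _ _) h1, by linarith⟩
  have hCu : ∀ i, C.a i ≤ Q.a i + q + d := by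
    intro i
    rw [hCa i]
    apply max_le
    · linarith [(hFgap i).1]
    · exact le_trans (min_le_left _ _) (by linarith)
  have hCl2 : ∀ i, Q.a i - d - θ ≤ C.a i := by
    intro i
    rw [hCa i]
    refine le_trans (le_min (by linarith) (by linarith [(hFgap i).2])) (le_max_right _ _)
  have hCfree : EFree E C := efree_of_subset hCF hF
  -- the cube X
  set X : Cube n := ⟨WithLp.toLp 2 (fun i => max (Q.a i - d - θ) (min (C.a i) (Q.a i + q + d + θ - L)) :
      Fin n → ℝ), L, hL0⟩ with hXdef
  have hXa : ∀ i, X.a i = max (Q.a i - d - θ) (min (C.a i) (Q.a i + q + d + θ - L)) :=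
    fun i => rfl
  have hXl : X.l = L := rfl
  have hXlo : ∀ i, Q.a i - d - θ ≤ X.a i := fun i => by rw [hXa i]; exact le_max_left _ _
  have hXhi : ∀ i, X.a i ≤ Q.a i + q + d + θ - L := by
    intro i
    rw [hXa i]
    apply max_le
    · linarith
    · exact min_le_right _ _
  have hCX : C.set ⊆ X.set := by
    intro x hx i
    have h1 := (hx i).1
    have h2 := (hx i).2
    rw [hCl] at h2
    constructor
    · have hXC : X.a i ≤ C.a i := by
        rw [hXa i]
        exact max_le (hCl2 i) (min_le_left _ _)
      linarith
    · rw [hXl]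
      have hmin : C.a i + θ - L ≤ min (C.a i) (Q.a i + q + d + θ - L) :=
        le_min (by linarith) (by linarith [hCu i])
      have : C.a i + θ - L ≤ X.a i := by
        rw [hXa i]
        exact le_trans hmin (le_max_right _ _)
      linarith
  -- weak porosity applied to X
  obtain ⟨N, fam, hfam1, hfam2, hfam3, hfam4⟩ := WP X
  have hXvol : (volume X.set).toReal = L ^ n := by rw [volume_cube, hXl]
  have hmfX : (θ/4)^n ≤ maxFree E X := regrid hn hCX hCfree
  -- apply the shell pigeonhole
  have hγc : 2 * (n:ℝ) * γ ≤ c / 2 := by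
    have : 2 * (n:ℝ) * γ = c / 4 := by
      rw [hγdef]
      field_simp
      ring
    linarith
  obtain ⟨m, p, hpmem, hpshell⟩ := shell_pigeonhole hn X hγ0 hγc hc0 fam
    (fun m => dyadic_subset (hfam1 m).1) hfam2 hfam4
  set W := fam m with hWdef
  have hWfree : EFree E W := (hfam1 m).2
  have hplo : ∀ i, X.a i + γ*L ≤ p i := by
    intro i
    have := (hpshell i).1
    rwa [hXl] at this
  have hphi : ∀ i, p i < X.a i + L - γ*L := by
    intro i
    have := (hpshell i).2
    rwa [hXl] at this
  -- lower bound for the side of W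
  have hWl : δ ^ ((n:ℝ))⁻¹ * θ / 4 ≤ W.l := by
    have h1 : δ * (θ/4)^n ≤ δ * maxFree E X := mul_le_mul_of_nonneg_left hmfX hδ0.le
    have h2 := hfam3 m
    have h3 : (volume W.set).toReal = W.l ^ n := volume_cube W
    have h4 : (δ ^ ((n:ℝ))⁻¹ * θ / 4) ^ n ≤ W.l ^ n := by
      have h5 : (δ ^ ((n:ℝ))⁻¹ * θ / 4 : ℝ) ^ n = δ * (θ/4)^n := by
        rw [div_pow, mul_pow, Real.rpow_inv_natCast_pow hδ0.le hn.ne', div_pow]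
        ring
      rw [h5]
      rw [← hWdef, h3] at h2
      linarith
    exact le_of_pow_le_pow_left₀ hn.ne' W.pos.le h4
  -- gap bounds for W
  have hWgap : ∀ i, gap Q W i ≤ max 0 (d + θ - γ*L) := by
    intro i
    have hw1 := (hpmem i).1
    have hw2 := (hpmem i).2
    rw [gap_le_iff]
    refine ⟨?_, ?_, le_max_left _ _⟩
    · have h6 : W.a i - (Q.a i + q) ≤ d + θ - γ*L := by
        have := hphi i
        have := hXhi i
        linarith
      exact le_trans h6 (le_max_right _ _)
    · have h6 : Q.a i - (W.a i + W.l) ≤ d + θ - γ*L := by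
        have := hplo i
        have := hXlo i
        linarith
      exact le_trans h6 (le_max_right _ _)
  refine ⟨W, hWfree, hWl, hWgap, ?_⟩
  -- penetration when d = 0
  intro hd0
  set s : ℝ := min W.l (γ*q/2) with hsdef
  have hs0 : 0 < s := lt_min W.pos (by positivity)
  set V : Cube n := ⟨WithLp.toLp 2 (fun i => max (W.a i) (Q.a i) : Fin n → ℝ), s, hs0⟩ with hVdef
  have hVa : ∀ i, V.a i = max (W.a i) (Q.a i) := fun i => rfl
  have hVl : V.l = s := rfl
  have hsW : s ≤ W.l := min_le_left _ _
  have hsγ : s ≤ γ*q/2 := min_le_right _ _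
  have hVW : V.set ⊆ W.set := by
    intro x hx i
    have h1 := (hx i).1
    have h2 := (hx i).2
    rw [hVa i] at h1 h2
    rw [hVl] at h2
    have hmax : max (W.a i) (Q.a i) ≤ W.a i + W.l - s := by
      have hw1 := (hpmem i).1
      have hw2 := (hpmem i).2
      have h5 := hplo i
      have h6 := hXlo i
      rw [hd0] at h6
      apply max_le
      · linarith
      · nlinarith [hγLθ, hsγ, hsW]
    exact ⟨le_trans (le_max_left _ _) h1, by linarith⟩
  have hVQ : V.set ⊆ Q.set := by
    intro x hx i
    have h1 := (hx i).1
    have h2 := (hx i).2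
    rw [hVa i] at h1 h2
    rw [hVl] at h2
    have hmax : max (W.a i) (Q.a i) ≤ Q.a i + q - s := by
      have hw1 := (hpmem i).1
      have h5 := hphi i
      have h6 := hXhi i
      rw [hd0] at h6
      apply max_le
      · nlinarith [hγLθ, hsγ, hsW]
      · nlinarith [hγLθ, hsγ, hsW, hγq, hq, hγ1]
    exact ⟨le_trans (le_max_right _ _) h1, by linarith⟩
  have hfin : (V.l/4)^n ≤ maxFree E Q := regrid hn hVQ (efree_of_subset hVW hWfree)
  rw [hVl] at hfin
  exact hfin



set_option maxHeartbeats 1000000 in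
lemma drag {E : Set (EuclideanSpace ℝ (Fin n))} {c δ : ℝ} (hn : 0 < n)
    (WP : WeaklyPorousWith E c δ) (hc0 : 0 < c) (hc1 : c < 1) (hδ0 : 0 < δ) (hδ1 : δ < 1)
    (Q F0 : Cube n) (hF0 : EFree E F0) (hgap0 : ∀ j, gap Q F0 j ≤ 2 * Q.l) :
    ∀ i : ℕ, ∃ F : Cube n, EFree E F ∧
      (∀ j, gap Q F j ≤ max 0 (2*Q.l - i * (c/(8*n) * Q.l / 2))) ∧
      (δ ^ ((n:ℝ))⁻¹ / 4) ^ i * min F0.l (c/(8*n) * Q.l / 2) ≤ F.l := by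
  have hnR : (0:ℝ) < n := by exact_mod_cast hn
  have hq : 0 < Q.l := Q.pos
  set q := Q.l with hqdef
  set γ : ℝ := c/(8*n) with hγdef
  have hγ0 : 0 < γ := by rw [hγdef]; positivity
  set e : ℝ := δ ^ ((n:ℝ))⁻¹ with hedef
  have he0 : 0 < e := Real.rpow_pos_of_pos hδ0 _
  have he1 : e ≤ 1 := Real.rpow_le_one hδ0.le hδ1.le (by positivity)
  set β : ℝ := e / 4 with hβdef
  have hβ0 : 0 < β := by positivity
  have hβ1 : β ≤ 1 := by rw [hβdef]; linarith
  set m0 : ℝ := min F0.l (γ * q / 2) with hm0def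
  have hm00 : 0 < m0 := lt_min F0.pos (by positivity)
  have hm0γ : m0 ≤ γ * q / 2 := min_le_right _ _
  intro i
  induction i with
  | zero =>
    refine ⟨F0, hF0, fun j => ?_, ?_⟩
    · simp only [Nat.cast_zero, zero_mul, sub_zero]
      exact le_trans (hgap0 j) (le_max_right _ _)
    · simp only [pow_zero, one_mul]
      exact min_le_left _ _
  | succ i ih =>
    obtain ⟨F, hFfree, hFgap, hFl⟩ := ih
    set d : ℝ := max 0 (2*q - i * (γ*q/2)) with hddef
    have hd0 : 0 ≤ d := le_max_left _ _
    obtain ⟨W, hWfree, hWl, hWgap, -⟩ :=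
      step hn WP hc0 hc1 hδ0 Q F hFfree hd0 hFgap
    rw [← hγdef] at hWgap hWl
    set θ : ℝ := min F.l (γ*q/2) with hθdef
    have hθ0 : 0 < θ := lt_min F.pos (by positivity)
    have hθγ : θ ≤ γ*q/2 := min_le_right _ _
    refine ⟨W, hWfree, fun j => ?_, ?_⟩
    · refine le_trans (hWgap j) ?_
      apply max_le (le_max_left _ _)
      have hkey : d + θ - γ*(q+θ) ≤ d - γ*q/2 := by nlinarith
      refine le_trans hkey ?_
      rcases le_total (2*q - i * (γ*q/2)) 0 with h | h
      · have hde : d = 0 := max_eq_left h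
        rw [hde]
        refine le_trans ?_ (le_max_left _ _)
        nlinarith
      · have hde : d = 2*q - i * (γ*q/2) := max_eq_right h
        rw [hde]
        refine le_trans (le_of_eq ?_) (le_max_right _ _)
        push_cast
        ring
    · have hθge : β ^ i * m0 ≤ θ := by
        apply le_min
        · exact hFl
        · have h1 : β ^ i ≤ 1 := pow_le_one₀ hβ0.le hβ1
          nlinarith [mul_le_of_le_one_left hm00.le h1]
      have h2 : β ^ (i+1) * m0 ≤ β * θ := by
        rw [pow_succ, mul_comm (β^i) β, mul_assoc]
        exact mul_le_mul_of_nonneg_left hθge hβ0.le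
      refine le_trans h2 ?_
      have h3 : β * θ = e * θ / 4 := by rw [hβdef]; ring
      rw [h3]
      exact hWl

set_option maxHeartbeats 1000000 in
lemma final {E : Set (EuclideanSpace ℝ (Fin n))} {c δ : ℝ} (hn : 0 < n)
    (WP : WeaklyPorousWith E c δ) (hc0 : 0 < c) (hc1 : c < 1) (hδ0 : 0 < δ) (hδ1 : δ < 1)
    (Q F0 : Cube n) (hF0 : EFree E F0) (hgap0 : ∀ j, gap Q F0 j ≤ 2 * Q.l)
    (hF0l : F0.l ≤ 2 * Q.l) (k1 j0 : ℕ)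
    (hk1 : 4 / (c/(8*n)) ≤ (k1:ℝ)) (hj0 : 4 / (c/(8*n)) ≤ (4:ℝ)^j0) :
    F0.l ^ n ≤ 4^(n*(k1+2+j0)) * δ⁻¹^(k1+2+j0) * maxFree E Q := by
  have hnR : (0:ℝ) < n := by exact_mod_cast hn
  have hq : 0 < Q.l := Q.pos
  have hγ0' : (0:ℝ) < c/(8*n) := by positivity
  obtain ⟨F, hFfree, hFgap, hFl⟩ := drag hn WP hc0 hc1 hδ0 hδ1 Q F0 hF0 hgap0 k1
  have hgap00 : ∀ j, gap Q F j ≤ 0 := by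
    intro j
    refine le_trans (hFgap j) ?_
    have h4γ : 4 ≤ (k1:ℝ) * (c/(8*n)) := by
      rw [div_le_iff₀ hγ0'] at hk1
      linarith
    apply max_le le_rfl
    nlinarith
  obtain ⟨W, hWfree, hWl, hWgap, hpen⟩ := step hn WP hc0 hc1 hδ0 Q F hFfree le_rfl hgap00
  have hpen2 := hpen rfl
  clear hpen hWgap hgap00 hFgap hgap0 hF0 hFfree hWfree
  -- arithmetic phase
  set K := k1 + 2 + j0 with hKdef
  set q := Q.l with hqdef
  set γ : ℝ := c/(8*(n:ℝ)) with hγdef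
  have hγ0 : 0 < γ := hγ0'
  set e : ℝ := δ ^ ((n:ℝ))⁻¹ with hedef
  have he0 : 0 < e := Real.rpow_pos_of_pos hδ0 _
  have he1 : e ≤ 1 := Real.rpow_le_one hδ0.le hδ1.le (by positivity)
  have hen : e ^ n = δ := Real.rpow_inv_natCast_pow hδ0.le hn.ne'
  set m0 : ℝ := min F0.l (γ * q / 2) with hm0def
  have hm00 : 0 < m0 := lt_min F0.pos (by positivity)
  have hm0γ : m0 ≤ γ * q / 2 := min_le_right _ _
  set θf : ℝ := min F.l (γ*q/2) with hθfdef
  have hθf0 : 0 < θf := lt_min F.pos (by positivity)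
  have hθfge : (e/4)^k1 * m0 ≤ θf := by
    apply le_min hFl
    have h1 : (e/4 : ℝ)^k1 ≤ 1 := pow_le_one₀ (by positivity) (by linarith)
    nlinarith [mul_le_of_le_one_left hm00.le h1]
  have hWlge : (e/4)^(k1+1) * m0 ≤ W.l := by
    have h2 : ((e/4:ℝ))^(k1+1) * m0 = (e/4) * ((e/4)^k1 * m0) := by ring
    rw [h2]
    calc (e/4) * ((e/4)^k1*m0) ≤ (e/4) * θf :=
          mul_le_mul_of_nonneg_left hθfge (by positivity)
      _ = e * θf / 4 := by ring
      _ ≤ W.l := hWl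
  have hek11 : (0:ℝ) < (e/4)^(k1+1) := by positivity
  have hminge : (e/4)^(k1+1) * m0 ≤ min W.l (γ*q/2) := by
    apply le_min hWlge
    have h1 : (e/4 : ℝ)^(k1+1) ≤ 1 := pow_le_one₀ (by positivity) (by linarith)
    nlinarith [mul_le_of_le_one_left hm00.le h1]
  set A : ℝ := (e/4)^(k1+1) * m0 / 4 with hAdef
  have hA0 : 0 < A := by positivity
  have hAn : A ^ n ≤ maxFree E Q := by
    refine le_trans (pow_le_pow_left₀ hA0.le ?_ n) hpen2
    rw [hAdef]
    linarith [hminge]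
  set C0 : ℝ := (4:ℝ)^K * (e⁻¹)^K with hC0def
  have hC00 : 0 ≤ C0 := by positivity
  have hC0n : C0 ^ n = 4^(n*K) * δ⁻¹^K := by
    rw [hC0def, mul_pow, ← pow_mul, mul_comm K n]
    congr 1
    calc ((e⁻¹)^K) ^ n = (e⁻¹)^(K*n) := (pow_mul _ _ _).symm
      _ = (e^(K*n))⁻¹ := by rw [inv_pow]
      _ = ((e^n)^K)⁻¹ := by rw [← pow_mul, mul_comm]
      _ = (δ^K)⁻¹ := by rw [hen]
      _ = δ⁻¹^K := (inv_pow _ _).symm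
  have hF0A : F0.l ≤ C0 * A := by
    have h40 : (0:ℝ) < 4^j0 := by positivity
    have hF0m : F0.l ≤ 4^j0 * m0 := by
      rcases le_total F0.l (γ*q/2) with h | h
      · rw [hm0def, min_eq_left h]
        nlinarith [one_le_pow₀ (show (1:ℝ) ≤ 4 by norm_num) (n := j0), F0.pos]
      · rw [hm0def, min_eq_right h]
        have h5 := mul_le_mul_of_nonneg_right hj0 (show (0:ℝ) ≤ γ*q/2 by positivity)
        have h6 : 4 / γ * (γ*q/2) = 2*q := by field_simp; ring
        rw [h6] at h5
        linarith
    refine le_trans hF0m ?_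
    have h4s : (4:ℝ)^K = 4^(k1+1) * 4 * 4^j0 := by
      rw [hKdef, pow_add, pow_add]
      ring
    have hes : e^K = e^(k1+1) * e^(1+j0) := by
      rw [← pow_add]
      congr 1
      omega
    have hCA : C0 * A = 4^j0 * (e^(1+j0))⁻¹ * m0 := by
      rw [hC0def, hAdef, div_pow, inv_pow, h4s, hes]
      have h41 : ((4:ℝ)^(k1+1)) ≠ 0 := by positivity
      have he1' : (e:ℝ)^(k1+1) ≠ 0 := by positivity
      have he2' : (e:ℝ)^(1+j0) ≠ 0 := by positivity
      field_simp
    rw [hCA]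
    have h1e : 1 ≤ (e^(1+j0))⁻¹ :=
      (one_le_inv₀ (pow_pos he0 _)).mpr (pow_le_one₀ he0.le he1)
    have h7 : (4:ℝ)^j0 * 1 * m0 ≤ 4^j0 * (e^(1+j0))⁻¹ * m0 :=
      mul_le_mul_of_nonneg_right (mul_le_mul_of_nonneg_left h1e h40.le) hm00.le
    linarith
  have hnn : F0.l^n ≤ (C0*A)^n := pow_le_pow_left₀ F0.pos.le hF0A n
  rw [mul_pow] at hnn
  calc F0.l^n ≤ C0^n * A^n := hnn
    _ ≤ C0^n * maxFree E Q :=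
        mul_le_mul_of_nonneg_left hAn (pow_nonneg hC00 n)
    _ = 4^(n*K) * δ⁻¹^K * maxFree E Q := by rw [hC0n]


lemma dyadic_self (P : Cube n) : IsDyadicSubcube P P := by
  refine ⟨0, fun _ => 0, fun i => by norm_num, by norm_num, fun i => by norm_num⟩


end WPaux
end

open WPaux in
/-- If `E` is weakly porous with constants `c, δ` and `Q ⊆ R` are cubes with
`|R| = 2ⁿ |Q|`, then there is `k = k(n,c) ∈ ℕ` with `|𝓜(R)| ≤ 4^{nk} δ^{-k} |𝓜(Q)|`. -/
theorem weaklyPorous_maxFree_comparison (n : ℕ) (c : ℝ) (hc0 : 0 < c) (hc1 : c < 1) :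
    ∃ k : ℕ, ∀ δ : ℝ, 0 < δ → δ < 1 →
      ∀ E : Set (EuclideanSpace ℝ (Fin n)), WeaklyPorousWith E c δ →
        ∀ Q R : Cube n, Q.set ⊆ R.set →
          (volume R.set).toReal = 2 ^ n * (volume Q.set).toReal →
          maxFree E R ≤ 4 ^ (n * k) * δ⁻¹ ^ k * maxFree E Q := by
  rcases Nat.eq_zero_or_pos n with rfl | hn
  · -- dimension 0
    refine ⟨1, ?_⟩
    intro δ hδ0 hδ1 E WP Q R hQR hvol
    have hδi : (1:ℝ) ≤ δ⁻¹ := (one_le_inv₀ hδ0).mpr hδ1.le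
    have hRHS : 0 ≤ 4 ^ (0 * 1) * δ⁻¹ ^ 1 * maxFree E Q :=
      mul_nonneg (by positivity) (maxFree_nonneg E Q)
    unfold maxFree
    refine Real.sSup_le ?_ hRHS
    rintro v ⟨C, hdy, hfree, rfl⟩
    have hCuniv : C.set = univ := eq_univ_iff_forall.mpr (fun x i => i.elim0)
    have hE : E = ∅ := by
      have h := hfree
      unfold EFree at h
      rwa [hCuniv, univ_inter] at h
    have hQfree : EFree E Q := by
      unfold EFree
      rw [hE, inter_empty]
    have h1 : (volume C.set).toReal = 1 := by rw [volume_cube, pow_zero]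
    have h2 : (1:ℝ) ≤ maxFree E Q := by
      have h3 := le_maxFree (dyadic_self Q) hQfree
      rw [volume_cube, pow_zero] at h3
      exact h3
    rw [h1]
    calc (1:ℝ) ≤ δ⁻¹ * maxFree E Q := by nlinarith
      _ = 4 ^ (0*1) * δ⁻¹ ^ 1 * maxFree E Q := by norm_num
  · -- main case
    have hnR : (0:ℝ) < n := by exact_mod_cast hn
    have hγ0 : (0:ℝ) < c / (8*n) := by positivity
    set k1 : ℕ := ⌈(4:ℝ) / (c/(8*n))⌉₊ with hk1def
    have hk1 : 4 / (c/(8*n)) ≤ (k1:ℝ) := Nat.le_ceil _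
    obtain ⟨j0, hj0'⟩ := pow_unbounded_of_one_lt ((4:ℝ) / (c/(8*n)))
      (by norm_num : (1:ℝ) < 4)
    have hj0 : 4 / (c/(8*n)) ≤ (4:ℝ)^j0 := hj0'.le
    refine ⟨k1 + 2 + j0, ?_⟩
    intro δ hδ0 hδ1 E WP Q R hQR hvol
    have hRHS : 0 ≤ 4 ^ (n * (k1+2+j0)) * δ⁻¹ ^ (k1+2+j0) * maxFree E Q :=
      mul_nonneg (by positivity) (maxFree_nonneg E Q)
    have h2q : R.l = 2 * Q.l := by
      rw [volume_cube, volume_cube] at hvol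
      have h1 : R.l ^ n = (2*Q.l) ^ n := by rw [hvol, mul_pow]
      rcases lt_trichotomy R.l (2*Q.l) with h | h | h
      · exfalso
        have := pow_lt_pow_left₀ h R.pos.le hn.ne'
        linarith
      · exact h
      · exfalso
        have := pow_lt_pow_left₀ h (by linarith [Q.pos] : (0:ℝ) ≤ 2*Q.l) hn.ne'
        linarith
    unfold maxFree
    refine Real.sSup_le ?_ hRHS
    rintro v ⟨F0, hdy, hfree, rfl⟩
    have hF0R : F0.set ⊆ R.set := dyadic_subset hdy
    have hF0l : F0.l ≤ 2 * Q.l := by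
      obtain ⟨h1, h2⟩ := subset_coords hF0R ⟨0, hn⟩
      rw [h2q] at h2
      linarith
    have hgap0 : ∀ j, gap Q F0 j ≤ 2 * Q.l := by
      intro j
      rw [gap_le_iff]
      obtain ⟨ha1, ha2⟩ := subset_coords hF0R j
      obtain ⟨hb1, hb2⟩ := subset_coords hQR j
      rw [h2q] at ha2 hb2
      refine ⟨by linarith [F0.pos, Q.pos], by linarith [F0.pos, Q.pos], by linarith [Q.pos]⟩
    have hmain := final hn WP hc0 hc1 hδ0 hδ1 Q F0 hfree hgap0 hF0l k1 j0 hk1 hj0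
    rw [volume_cube]
    exact hmain
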